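/- Let {G_i} be connected graphs with common induced subgraph J, and let H be their amalgamation over J. If the diameter of J is at most 2, then every G_i is isometrically embedded in H. -/

import Mathlib

open SimpleGraph

/-- `S` is a local metric set for `G`: every pair of adjacent vertices is
distinguished (by distance) by some vertex of `S`. -/
def IsLocalMetricSet {V : Type*} (G : SimpleGraph V) (S : Set V) : Prop :=
  ∀ u v : V, G.Adj u v → ∃ s ∈ S, G.dist s u ≠ G.dist s v

/-- The local metric dimension of `G`: the minimum cardinality of a local metric set. -/
noncomputable def localMetricDim {V : Type*} (G : SimpleGraph V) : ℕ :=
  sInf {n | ∃ S : Set V, S.ncard = n ∧ IsLocalMetricSet G S}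

/-- `H` is the subgraph-amalgamation of the family `G i` over the common induced
subgraph `J`, via induced embeddings `e i : J → G i` and `f i : G i → H`. -/
structure IsAmalgamation {ι VJ W : Type*} {Vg : ι → Type*}
    (J : SimpleGraph VJ) (G : ∀ i, SimpleGraph (Vg i)) (H : SimpleGraph W)
    (e : ∀ i, VJ → Vg i) (f : ∀ i, Vg i → W) : Prop where
  e_inj : ∀ i, Function.Injective (e i)
  e_ind : ∀ i a b, (G i).Adj (e i a) (e i b) ↔ J.Adj a b
  f_inj : ∀ i, Function.Injective (f i)
  f_ind : ∀ i x y, H.Adj (f i x) (f i y) ↔ (G i).Adj x y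
  compat : ∀ i j a, f i (e i a) = f j (e j a)
  inter : ∀ i j x y, i ≠ j → f i x = f j y → ∃ a, x = e i a ∧ y = e j a
  cover : ∀ w, ∃ i x, f i x = w
  edge_mem : ∀ x y, H.Adj x y → ∃ i a b, x = f i a ∧ y = f i b



section Aux

variable {ι VJ W : Type*} {Vg : ι → Type*}
    {J : SimpleGraph VJ} {G : ∀ i, SimpleGraph (Vg i)} {H : SimpleGraph W}
    {e : ∀ i, VJ → Vg i} {f : ∀ i, Vg i → W}

lemma amalg_split (amal : IsAmalgamation J G H e f) :
    ∀ {w v : W} (q : H.Walk w v) (i : ι) (y : Vg i), v = f i y → w ∉ Set.range (f i) →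
      ∃ (c : VJ) (q1 : H.Walk w (f i (e i c))) (q2 : H.Walk (f i (e i c)) v),
        q1.length + q2.length = q.length ∧ 1 ≤ q1.length := by
  classical
  intro w v q
  induction q with
  | nil =>
    intro i y hv hw
    exact absurd ⟨y, hv.symm⟩ hw
  | @cons w w' v h q' ih =>
    intro i y hv hw
    by_cases hw' : w' ∈ Set.range (f i)
    · obtain ⟨z, hz⟩ := hw'
      obtain ⟨k, a, b, hwa, hwb⟩ := amal.edge_mem _ _ h
      have hki : k ≠ i := by
        rintro rfl; exact hw ⟨a, hwa.symm⟩
      obtain ⟨c, hzc, hbc⟩ := amal.inter i k z b hki.symm (by rw [hz, hwb])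
      have hw'' : w' = f i (e i c) := by rw [← hz, hzc]
      refine ⟨c, (Walk.cons h Walk.nil).copy rfl hw'', q'.copy hw'' rfl, by simp [Nat.add_comm], by simp⟩
    · obtain ⟨c, q1, q2, hlen, h1⟩ := ih i y hv hw'
      refine ⟨c, Walk.cons h q1, q2, ?_, by simp⟩
      simp only [Walk.length_cons]
      omega

lemma amalg_key (amal : IsAmalgamation J G H e f)
    (hGconn : ∀ i, (G i).Connected) (hJconn : J.Connected)
    (hdiam : ∀ a b : VJ, J.dist a b ≤ 2) :
    ∀ (n : ℕ) (i : ι) (x y : Vg i) (u v : W) (p : H.Walk u v),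
      u = f i x → v = f i y → p.length ≤ n → (G i).dist x y ≤ p.length := by
  classical
  intro n
  induction n using Nat.strong_induction_on with
  | _ n ihn =>
  intro i x y u v p hu hv hle
  cases p with
  | nil =>
    have : x = y := amal.f_inj i (hu.symm.trans hv)
    simp [this]
  | @cons _ w _ h q =>
    subst hu hv
    simp only [Walk.length_cons] at hle ⊢
    by_cases hw : w ∈ Set.range (f i)
    · obtain ⟨z, hz⟩ := hw
      have hadj : (G i).Adj x z := (amal.f_ind i x z).mp (hz ▸ h)
      have hq : (G i).dist z y ≤ q.length :=
        ihn q.length (by omega) i z y w (f i y) q hz.symm rfl le_rfl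
      obtain ⟨r, hr⟩ := ((hGconn i).preconnected z y).exists_walk_length_eq_dist
      have := (G i).dist_le (Walk.cons hadj r)
      simp only [Walk.length_cons, hr] at this
      omega
    · obtain ⟨k, a, b, hwa, hwb⟩ := amal.edge_mem _ _ h
      have hki : k ≠ i := by
        rintro rfl; exact hw ⟨b, hwb.symm⟩
      obtain ⟨c1, hac1, hxc1⟩ := amal.inter k i a x hki hwa.symm
      subst hxc1
      obtain ⟨c2, q1, q2, hlen, h1⟩ := amalg_split amal q i y rfl hw
      have hq2 : (G i).dist (e i c2) y ≤ q2.length :=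
        ihn q2.length (by omega) i (e i c2) y _ _ q2 rfl rfl le_rfl
      obtain ⟨rJ, hrJ⟩ := (hJconn.preconnected c1 c2).exists_walk_length_eq_dist
      let homE : J →g G i := ⟨e i, fun {a b} hab => (amal.e_ind i a b).mpr hab⟩
      have hJ2 : (G i).dist (e i c1) (e i c2) ≤ 2 := by
        have := (G i).dist_le (rJ.map homE)
        simp only [Walk.length_map, hrJ] at this
        exact this.trans (hdiam c1 c2)
      obtain ⟨r1, hr1⟩ := ((hGconn i).preconnected (e i c1) (e i c2)).exists_walk_length_eq_dist
      obtain ⟨r2, hr2⟩ := ((hGconn i).preconnected (e i c2) y).exists_walk_length_eq_dist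
      have := (G i).dist_le (r1.append r2)
      rw [Walk.length_append] at this
      omega

end Aux

/-- If the diameter of `J` is at most 2, then every `G i` is isometrically embedded
in the amalgamation `H`. -/
theorem stmt_9 {ι VJ W : Type*} [Nonempty VJ] {Vg : ι → Type*}
    (J : SimpleGraph VJ) (G : ∀ i, SimpleGraph (Vg i)) (H : SimpleGraph W)
    (e : ∀ i, VJ → Vg i) (f : ∀ i, Vg i → W)
    (amal : IsAmalgamation J G H e f)
    (hGconn : ∀ i, (G i).Connected)
    (hJconn : J.Connected) (hdiam : ∀ a b : VJ, J.dist a b ≤ 2) :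
    ∀ i (x y : Vg i), (G i).dist x y = H.dist (f i x) (f i y) := by
  classical
  intro i x y
  let homF : G i →g H := ⟨f i, fun {a b} hab => (amal.f_ind i a b).mpr hab⟩
  obtain ⟨p, hp⟩ := ((hGconn i).preconnected x y).exists_walk_length_eq_dist
  refine le_antisymm ?_ ?_
  · have hreach : H.Reachable (f i x) (f i y) := ⟨p.map homF⟩
    obtain ⟨q, hq⟩ := hreach.exists_walk_length_eq_dist
    have := amalg_key amal hGconn hJconn hdiam q.length i x y _ _ q rfl rfl le_rfl
    omega
  · have := H.dist_le (p.map homF)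
    simp only [Walk.length_map, hp] at this
    exact this
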